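/- Example 1 (zero-curvature equation for the four-component system): let u, v, w, q : ℝ⁴ → ℝ be continuously differentiable functions of (x, y, z, t), and define f(x,y,z,t,p) = p² + w·p + u and g(x,y,z,t,p) = p³ + 2w·p² + q·p + v. Then ∂_t f − ∂_y g + {f, g}_L = 0 holds for all (x, y, z, t, p) ∈ ℝ⁵ (bracket in the variables (x, z, p)) if and only if at every (x, y, z, t) the following four equations hold: (i) u_t − v·u_z − q·u_x + u·v_z + w·v_x − v_y = 0; (ii) 2u_z + w_x + 2w·w_z − q_z = 0; (iii) 2q_x − 3u_x − 2w_y + 2w·u_z − v_z − 2w·w_x + 2u·w_z = 0; (iv) w_t − q_y + 2v_x − 4w·u_x + w·q_x − q·w_x − v·w_z + u·q_z = 0. -/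

import Mathlib

/-- Partial derivative of a function on ℝ⁵ in the `i`-th coordinate.
Coordinates: `0 ↦ x`, `1 ↦ y`, `2 ↦ z`, `3 ↦ t`, `4 ↦ p`. -/
noncomputable def pd5 (i : Fin 5) (h : (Fin 5 → ℝ) → ℝ) (r : Fin 5 → ℝ) : ℝ :=
  fderiv ℝ h r (Pi.single i 1)

/-- Partial derivative of a function on ℝ⁴ in the `i`-th coordinate.
Coordinates: `0 ↦ x`, `1 ↦ y`, `2 ↦ z`, `3 ↦ t`. -/
noncomputable def pd4 (i : Fin 4) (h : (Fin 4 → ℝ) → ℝ) (w : Fin 4 → ℝ) : ℝ :=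
  fderiv ℝ h w (Pi.single i 1)

/-- The contact (Lagrange) bracket in the variables `(x, z, p) = (r 0, r 2, r 4)`,
with `(y, t) = (r 1, r 3)` as parameters. -/
noncomputable def cbr5 (h₁ h₂ : (Fin 5 → ℝ) → ℝ) (r : Fin 5 → ℝ) : ℝ :=
  pd5 4 h₁ r * pd5 0 h₂ r - pd5 4 h₂ r * pd5 0 h₁ r
    - r 4 * (pd5 4 h₁ r * pd5 2 h₂ r - pd5 4 h₂ r * pd5 2 h₁ r)
    + h₁ r * pd5 2 h₂ r - h₂ r * pd5 2 h₁ r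

/-- Action of the contact vector field `X_h` in the variables `(x, z, p) = (r 0, r 2, r 4)`,
pointwise in the parameters `(y, t) = (r 1, r 3)`:
`X_h(φ) = hₚ φₓ + (p h_z − hₓ) φₚ + (h − p hₚ) φ_z`. -/
noncomputable def X5 (h φ : (Fin 5 → ℝ) → ℝ) (r : Fin 5 → ℝ) : ℝ :=
  pd5 4 h r * pd5 0 φ r + (r 4 * pd5 2 h r - pd5 0 h r) * pd5 4 φ r
    + (h r - r 4 * pd5 4 h r) * pd5 2 φ r

/-- Projection `(x,y,z,t,p) ↦ (x,y,z,t)`. -/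
def proj45 (r : Fin 5 → ℝ) : Fin 4 → ℝ := fun i => r i.castSucc

noncomputable def P45 : ((Fin 5 → ℝ) →L[ℝ] (Fin 4 → ℝ)) :=
  ContinuousLinearMap.pi (fun i => ContinuousLinearMap.proj i.castSucc)

lemma sc0 : (fun j : Fin 4 => (Pi.single (0:Fin 5) (1:ℝ) : Fin 5 → ℝ) j.castSucc) = Pi.single 0 1 := by
  funext j; fin_cases j <;> simp [Pi.single_apply] <;> decide
lemma sc1 : (fun j : Fin 4 => (Pi.single (1:Fin 5) (1:ℝ) : Fin 5 → ℝ) j.castSucc) = Pi.single 1 1 := by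
  funext j; fin_cases j <;> simp [Pi.single_apply] <;> decide
lemma sc2 : (fun j : Fin 4 => (Pi.single (2:Fin 5) (1:ℝ) : Fin 5 → ℝ) j.castSucc) = Pi.single 2 1 := by
  funext j; fin_cases j <;> simp [Pi.single_apply] <;> decide
lemma sc3 : (fun j : Fin 4 => (Pi.single (3:Fin 5) (1:ℝ) : Fin 5 → ℝ) j.castSucc) = Pi.single 3 1 := by
  funext j; fin_cases j <;> simp [Pi.single_apply] <;> decide
lemma sc4 : (fun j : Fin 4 => (Pi.single (4:Fin 5) (1:ℝ) : Fin 5 → ℝ) j.castSucc) = 0 := by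
  funext j; fin_cases j <;> simp [Pi.single_apply] <;> decide

lemma key (u v w q : (Fin 4 → ℝ) → ℝ)
    (hu : ContDiff ℝ 1 u) (hv : ContDiff ℝ 1 v)
    (hw : ContDiff ℝ 1 w) (hq : ContDiff ℝ 1 q)
    (f g : (Fin 5 → ℝ) → ℝ)
    (hf : f = fun r => (r 4) ^ 2 + w (proj45 r) * r 4 + u (proj45 r))
    (hg : g = fun r =>
      (r 4) ^ 3 + 2 * w (proj45 r) * (r 4) ^ 2 + q (proj45 r) * r 4 + v (proj45 r))
    (r : Fin 5 → ℝ) :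
    pd5 3 f r - pd5 1 g r + cbr5 f g r =
      (pd4 3 u (proj45 r) - v (proj45 r) * pd4 2 u (proj45 r) - q (proj45 r) * pd4 0 u (proj45 r)
          + u (proj45 r) * pd4 2 v (proj45 r) + w (proj45 r) * pd4 0 v (proj45 r) - pd4 1 v (proj45 r))
      + (pd4 3 w (proj45 r) - pd4 1 q (proj45 r) + 2 * pd4 0 v (proj45 r) - 4 * w (proj45 r) * pd4 0 u (proj45 r)
          + w (proj45 r) * pd4 0 q (proj45 r) - q (proj45 r) * pd4 0 w (proj45 r)
          - v (proj45 r) * pd4 2 w (proj45 r) + u (proj45 r) * pd4 2 q (proj45 r)) * r 4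
      + (2 * pd4 0 q (proj45 r) - 3 * pd4 0 u (proj45 r) - 2 * pd4 1 w (proj45 r)
          + 2 * w (proj45 r) * pd4 2 u (proj45 r) - pd4 2 v (proj45 r)
          - 2 * w (proj45 r) * pd4 0 w (proj45 r) + 2 * u (proj45 r) * pd4 2 w (proj45 r)) * (r 4) ^ 2
      + (2 * pd4 2 u (proj45 r) + pd4 0 w (proj45 r) + 2 * w (proj45 r) * pd4 2 w (proj45 r)
          - pd4 2 q (proj45 r)) * (r 4) ^ 3 := by
  subst hf hg
  set s := proj45 r with hs
  have hP : proj45 = ⇑P45 := rfl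
  have hx : HasFDerivAt (fun r : Fin 5 → ℝ => r 4)
      (ContinuousLinearMap.proj (R := ℝ) (φ := fun _ : Fin 5 => ℝ) 4) r :=
    (ContinuousLinearMap.proj 4 : (Fin 5 → ℝ) →L[ℝ] ℝ).hasFDerivAt
  have comp : ∀ h : (Fin 4 → ℝ) → ℝ, ContDiff ℝ 1 h →
      HasFDerivAt (fun r : Fin 5 → ℝ => h (proj45 r)) ((fderiv ℝ h s).comp P45) r := by
    intro h hh
    have := (hh.differentiable one_ne_zero).differentiableAt (x := s) |>.hasFDerivAt
    exact this.comp r (hP ▸ P45.hasFDerivAt)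
  have hwc := comp w hw
  have huc := comp u hu
  have hqc := comp q hq
  have hvc := comp v hv
  have hF := ((hx.mul hx).add (hwc.mul hx)).add huc
  simp only [Pi.add_def, Pi.mul_def] at hF
  rw [show (fun r : Fin 5 → ℝ => r 4 * r 4 + w (proj45 r) * r 4 + u (proj45 r))
      = (fun r : Fin 5 → ℝ => (r 4) ^ 2 + w (proj45 r) * r 4 + u (proj45 r))
      from funext fun r => by ring] at hF
  have hG := ((((hx.mul hx).mul hx).add ((hwc.const_mul 2).mul (hx.mul hx))).add (hqc.mul hx)).add hvc
  simp only [Pi.add_def, Pi.mul_def] at hG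
  rw [show (fun r : Fin 5 → ℝ => r 4 * r 4 * r 4 + 2 * w (proj45 r) * (r 4 * r 4) + q (proj45 r) * r 4 + v (proj45 r))
      = (fun r : Fin 5 → ℝ => (r 4) ^ 3 + 2 * w (proj45 r) * (r 4) ^ 2 + q (proj45 r) * r 4 + v (proj45 r))
      from funext fun r => by ring] at hG
  have hDF := hF.fderiv
  have hDG := hG.fderiv
  have e4 : ∀ i : Fin 5, (ContinuousLinearMap.proj (R := ℝ) (φ := fun _ : Fin 5 => ℝ) 4)
      (Pi.single i 1) = if (4:Fin 5) = i then 1 else 0 := by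
    intro i; simp [Pi.single_apply]
  have eP : ∀ (h : (Fin 4 → ℝ) → ℝ) (i : Fin 5),
      ((fderiv ℝ h s).comp P45) (Pi.single i 1)
        = fderiv ℝ h s (fun j : Fin 4 => (Pi.single i (1:ℝ) : Fin 5 → ℝ) j.castSucc) := by
    intro h i; rfl
  simp only [cbr5, pd5, hDF, hDG, ContinuousLinearMap.add_apply, ContinuousLinearMap.smul_apply,
    e4, eP, sc0, sc1, sc2, sc3, sc4, map_zero, smul_eq_mul, pd4, ← hs]
  norm_num [show (4:Fin 5) ≠ 3 from by decide, show (4:Fin 5) ≠ 1 from by decide,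
    show (4:Fin 5) ≠ 0 from by decide, show (4:Fin 5) ≠ 2 from by decide]
  ring

/-- Example 1: for C¹ functions `u, v, w, q : ℝ⁴ → ℝ` of `(x,y,z,t)` and
`f = p² + w p + u`, `g = p³ + 2w p² + q p + v`, the zero-curvature-type equation
`∂_t f − ∂_y g + {f,g}_L = 0` holds for all `(x,y,z,t,p) ∈ ℝ⁵` iff the four-component
system (4ddkp) holds at every `(x,y,z,t)`. -/
theorem example1_zero_curvature_iff_system (u v w q : (Fin 4 → ℝ) → ℝ)
    (hu : ContDiff ℝ 1 u) (hv : ContDiff ℝ 1 v)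
    (hw : ContDiff ℝ 1 w) (hq : ContDiff ℝ 1 q)
    (f g : (Fin 5 → ℝ) → ℝ)
    (hf : f = fun r => (r 4) ^ 2 + w (proj45 r) * r 4 + u (proj45 r))
    (hg : g = fun r =>
      (r 4) ^ 3 + 2 * w (proj45 r) * (r 4) ^ 2 + q (proj45 r) * r 4 + v (proj45 r)) :
    (∀ r : Fin 5 → ℝ, pd5 3 f r - pd5 1 g r + cbr5 f g r = 0) ↔
    (∀ s : Fin 4 → ℝ,
      (pd4 3 u s - v s * pd4 2 u s - q s * pd4 0 u s
          + u s * pd4 2 v s + w s * pd4 0 v s - pd4 1 v s = 0) ∧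
      (2 * pd4 2 u s + pd4 0 w s + 2 * w s * pd4 2 w s - pd4 2 q s = 0) ∧
      (2 * pd4 0 q s - 3 * pd4 0 u s - 2 * pd4 1 w s + 2 * w s * pd4 2 u s
          - pd4 2 v s - 2 * w s * pd4 0 w s + 2 * u s * pd4 2 w s = 0) ∧
      (pd4 3 w s - pd4 1 q s + 2 * pd4 0 v s - 4 * w s * pd4 0 u s
          + w s * pd4 0 q s - q s * pd4 0 w s - v s * pd4 2 w s + u s * pd4 2 q s = 0)) := by
  constructor
  · intro H s
    have hE : ∀ p : ℝ,
        (pd4 3 u s - v s * pd4 2 u s - q s * pd4 0 u s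
            + u s * pd4 2 v s + w s * pd4 0 v s - pd4 1 v s)
        + (pd4 3 w s - pd4 1 q s + 2 * pd4 0 v s - 4 * w s * pd4 0 u s
            + w s * pd4 0 q s - q s * pd4 0 w s
            - v s * pd4 2 w s + u s * pd4 2 q s) * p
        + (2 * pd4 0 q s - 3 * pd4 0 u s - 2 * pd4 1 w s
            + 2 * w s * pd4 2 u s - pd4 2 v s
            - 2 * w s * pd4 0 w s + 2 * u s * pd4 2 w s) * p ^ 2
        + (2 * pd4 2 u s + pd4 0 w s + 2 * w s * pd4 2 w s
            - pd4 2 q s) * p ^ 3 = 0 := by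
      intro p
      have h1 := key u v w q hu hv hw hq f g hf hg (Fin.snoc s p)
      have h2 := H (Fin.snoc s p)
      have hproj : proj45 (Fin.snoc s p) = s := by
        funext i; simp [proj45, Fin.snoc_castSucc]
      have hlast : (Fin.snoc s p : Fin 5 → ℝ) 4 = p := by
        show (Fin.snoc s p : Fin 5 → ℝ) (Fin.last 4) = p
        exact Fin.snoc_last _ _
      rw [hproj, hlast] at h1
      linarith [h1, h2]
    have e0 := hE 0
    have e1 := hE 1
    have e2 := hE (-1)
    have e3 := hE 2
    norm_num at e0 e1 e2 e3
    refine ⟨by linarith, by linarith, by linarith, by linarith⟩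
  · intro H r
    obtain ⟨h1, h2, h3, h4⟩ := H (proj45 r)
    rw [key u v w q hu hv hw hq f g hf hg r]
    linear_combination h1 + h4 * r 4 + h3 * (r 4) ^ 2 + h2 * (r 4) ^ 3
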